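/- (Existence of the center of axial asymmetry for polygons.) For every n ≥ 3 there exist n-gon centers X and Y, both defined on the family of all labellings v : Fin n → ℂ, such that for every labelling v: (a) X(v) equals the centroid of v if and only if Fix(v) consists of exactly one point; and (b) the three points centroid(v), X(v), Y(v) are pairwise distinct and not collinear if and only if Fix(v) = ℂ (equivalently, the only symmetry of the n-gon v is the identity). -/

import Mathlib

noncomputable section

/-- A similarity of the plane: a bijection multiplying all distances by a fixed
positive ratio. -/
def IsSimilarity (f : ℂ → ℂ) : Prop :=
  Function.Bijective f ∧ ∃ r : ℝ, 0 < r ∧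
    ∀ z w : ℂ, ‖f z - f w‖ = r * ‖z - w‖

/-- An isometry of the plane: a similarity with ratio 1. -/
def IsPlaneIsometry (f : ℂ → ℂ) : Prop :=
  Function.Bijective f ∧ ∀ z w : ℂ, ‖f z - f w‖ = ‖z - w‖

/-- `α` is an element of the dihedral subgroup of the permutations of `Fin n`:
`i ↦ i + k` or `i ↦ k - i` (mod `n`). -/
def IsDihedral (n : ℕ) (α : Fin n → Fin n) : Prop :=
  (∃ k : Fin n, ∀ i, α i = i + k) ∨ (∃ k : Fin n, ∀ i, α i = k - i)

/-- `T` is a symmetry of the `n`-gon labelled by `v`: a plane isometry with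
`T ∘ v = v ∘ α` for some dihedral relabelling `α`. -/
def IsPolygonSymmetry (n : ℕ) (v : Fin n → ℂ) (T : ℂ → ℂ) : Prop :=
  IsPlaneIsometry T ∧ ∃ α : Fin n → Fin n, IsDihedral n α ∧ T ∘ v = v ∘ α

/-- The set of points fixed by every symmetry of the `n`-gon labelled by `v`. -/
def FixPolygon (n : ℕ) (v : Fin n → ℂ) : Set ℂ :=
  {x | ∀ T : ℂ → ℂ, IsPolygonSymmetry n v T → T x = x}

namespace S13

lemma sim_id : IsSimilarity id := ⟨Function.bijective_id, 1, one_pos, fun z w => by simp⟩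

lemma sim_comp {f g : ℂ → ℂ} (hf : IsSimilarity f) (hg : IsSimilarity g) :
    IsSimilarity (f ∘ g) := by
  obtain ⟨hfb, r, hr, hfd⟩ := hf
  obtain ⟨hgb, s, hs, hgd⟩ := hg
  exact ⟨hfb.comp hgb, r * s, mul_pos hr hs, fun z w => by
    simp only [Function.comp_apply, hfd, hgd]; ring⟩

lemma sim_inv {f : ℂ → ℂ} (hf : IsSimilarity f) : IsSimilarity (Function.invFun f) := by
  obtain ⟨hfb, r, hr, hfd⟩ := hf
  have hli := Function.leftInverse_invFun hfb.1
  have hri := Function.rightInverse_invFun hfb.2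
  refine ⟨⟨fun a b h => by rw [← hri a, ← hri b, h], fun a => ⟨f a, hli a⟩⟩,
    r⁻¹, by positivity, fun z w => ?_⟩
  have := hfd (Function.invFun f z) (Function.invFun f w)
  rw [hri, hri] at this
  rw [this]; field_simp

lemma sim_invFun_comp {f : ℂ → ℂ} (hf : IsSimilarity f) : Function.invFun f ∘ f = id :=
  funext fun x => Function.leftInverse_invFun hf.1.1 x

lemma sim_comp_invFun {f : ℂ → ℂ} (hf : IsSimilarity f) : f ∘ Function.invFun f = id :=
  funext fun x => Function.rightInverse_invFun hf.1.2 x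

lemma iso_sim {f : ℂ → ℂ} (hf : IsPlaneIsometry f) : IsSimilarity f :=
  ⟨hf.1, 1, one_pos, fun z w => by rw [hf.2, one_mul]⟩

variable {n : ℕ} [NeZero n]

lemma dih_id : IsDihedral n (id : Fin n → Fin n) := Or.inl ⟨0, fun i => by simp⟩

lemma dih_bij {α : Fin n → Fin n} (h : IsDihedral n α) : Function.Bijective α := by
  rcases h with ⟨k, hk⟩ | ⟨k, hk⟩
  · have : α = fun i => i + k := funext hk
    rw [this]; exact (Equiv.addRight k).bijective
  · have : α = fun i => k - i := funext hk
    rw [this]; exact (Equiv.subLeft k).bijective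

lemma dih_comp {α β : Fin n → Fin n} (ha : IsDihedral n α) (hb : IsDihedral n β) :
    IsDihedral n (α ∘ β) := by
  rcases ha with ⟨k, hk⟩ | ⟨k, hk⟩ <;> rcases hb with ⟨l, hl⟩ | ⟨l, hl⟩
  · exact Or.inl ⟨l + k, fun i => by simp [hk, hl, add_assoc]⟩
  · exact Or.inr ⟨l + k, fun i => by simp [hk, hl]; abel⟩
  · exact Or.inr ⟨k - l, fun i => by simp [hk, hl]; abel⟩
  · exact Or.inl ⟨k - l, fun i => by simp [hk, hl]; abel⟩

lemma dih_inv {α : Fin n → Fin n} (h : IsDihedral n α) :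
    ∃ α' : Fin n → Fin n, IsDihedral n α' ∧ α ∘ α' = id ∧ α' ∘ α = id := by
  rcases h with ⟨k, hk⟩ | ⟨k, hk⟩
  · exact ⟨fun i => i + (-k), Or.inl ⟨-k, fun i => rfl⟩,
      funext fun i => by simp [hk], funext fun i => by simp [hk]⟩
  · exact ⟨fun i => k - i, Or.inr ⟨k, fun i => rfl⟩,
      funext fun i => by simp [hk], funext fun i => by simp [hk]⟩

end S13

namespace S13

/-- Every similarity is a real-affine map with bijective linear part. -/
lemma sim_affine {f : ℂ → ℂ} (hf : IsSimilarity f) :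
    ∃ L : ℂ →ₗ[ℝ] ℂ, Function.Bijective L ∧ ∀ z, f z = L z + f 0 := by
  obtain ⟨hfb, r, hr, hfd⟩ := hf
  set g : ℂ → ℂ := fun z => r⁻¹ • (f z - f 0) with hg
  have hfd' : ∀ z w, ‖f z - f w‖ = r * ‖z - w‖ := hfd
  have hgd : ∀ z w, ‖g z - g w‖ = ‖z - w‖ := by
    intro z w
    have : g z - g w = r⁻¹ • (f z - f w) := by simp [hg, smul_sub]
    rw [this, norm_smul, hfd']
    simp only [norm_inv, Real.norm_eq_abs, abs_of_pos hr]
    field_simp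
  have hgb : Function.Bijective g := by
    constructor
    · intro a b h
      apply hfb.1
      have := congrArg (fun x => (r:ℝ) • x) h
      simp only [hg, smul_smul, mul_inv_cancel₀ hr.ne', one_smul] at this
      linear_combination (norm := module) this
    · intro a
      obtain ⟨b, hb⟩ := hfb.2 (r • a + f 0)
      refine ⟨b, ?_⟩
      simp only [hg, hb, add_sub_cancel_right, smul_smul, inv_mul_cancel₀ hr.ne', one_smul]
  have hiso : Isometry g := Isometry.of_dist_eq fun z w => by
    rw [dist_eq_norm, dist_eq_norm, hgd]
  let e : ℂ ≃ᵢ ℂ := ⟨Equiv.ofBijective g hgb, hiso⟩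
  have h0 : e 0 = 0 := by simp [e, Equiv.ofBijective, hg]
  let L0 := e.toRealLinearIsometryEquivOfMapZero h0
  have hL0 : ∀ z, (L0 : ℂ → ℂ) z = g z := fun z => by
    rw [IsometryEquiv.coe_toRealLinearIsometryEquivOfMapZero]; rfl
  refine ⟨r • (L0.toLinearEquiv : ℂ →ₗ[ℝ] ℂ), ⟨?_, ?_⟩, ?_⟩
  · intro a b h
    simp only [LinearMap.smul_apply] at h
    have := smul_right_injective ℂ hr.ne' h
    exact L0.injective (by exact_mod_cast this)
  · intro a
    refine ⟨L0.symm (r⁻¹ • a), ?_⟩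
    simp only [LinearMap.smul_apply]
    have : (L0.toLinearEquiv : ℂ →ₗ[ℝ] ℂ) (L0.symm (r⁻¹ • a)) = r⁻¹ • a :=
      L0.apply_symm_apply _
    rw [this, smul_smul, mul_inv_cancel₀ hr.ne', one_smul]
  · intro z
    have : (r:ℝ) • g z = f z - f 0 := by
      simp only [hg, smul_smul, mul_inv_cancel₀ hr.ne', one_smul]
    simp only [LinearMap.smul_apply]
    rw [show ((L0.toLinearEquiv : ℂ →ₗ[ℝ] ℂ) z) = g z from hL0 z, this]
    ring

end S13

namespace S13

def ctr (n : ℕ) (v : Fin n → ℂ) : ℂ := (∑ i, v i) / n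

lemma ctr_comp {n : ℕ} (v : Fin n → ℂ) {α : Fin n → Fin n} (hα : Function.Bijective α) :
    ctr n (v ∘ α) = ctr n v := by
  unfold ctr
  rw [show ∑ i, (v ∘ α) i = ∑ i, v i from hα.sum_comp v]

lemma sim_ctr {n : ℕ} (hn : n ≠ 0) {f : ℂ → ℂ} (hf : IsSimilarity f) (v : Fin n → ℂ) :
    ctr n (f ∘ v) = f (ctr n v) := by
  obtain ⟨L, hLb, hL⟩ := sim_affine hf
  have hnC : (n : ℂ) ≠ 0 := Nat.cast_ne_zero.mpr hn
  have key : ∀ z : ℂ, L (z / n) = L z / n := by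
    intro z
    have : z / n = (n : ℝ)⁻¹ • z := by
      rw [Complex.real_smul]; push_cast; ring
    rw [this, map_smul, Complex.real_smul]
    push_cast; ring
  unfold ctr
  have h1 : ∑ i, (f ∘ v) i = ∑ i, (L (v i) + f 0) :=
    Finset.sum_congr rfl fun i _ => hL (v i)
  rw [h1, hL ((∑ i, v i) / n), Finset.sum_add_distrib, Finset.sum_const, ← map_sum,
    Finset.card_univ, Fintype.card_fin, add_div, key, nsmul_eq_mul]
  congr 1
  exact mul_div_cancel_left₀ (f 0) hnC

end S13

namespace S13

/-- Conjugating a symmetry by a similarity pair `(f, g)` with `f ∘ g = g ∘ f = id`. -/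
lemma sym_conj {n : ℕ} [NeZero n] {v : Fin n → ℂ} {f g T : ℂ → ℂ} {β : Fin n → Fin n}
    (hf : IsSimilarity f) (hg : IsSimilarity g) (hfg : f ∘ g = id) (hgf : g ∘ f = id)
    (hβ : IsDihedral n β) (hT : IsPolygonSymmetry n v T) :
    IsPolygonSymmetry n (f ∘ v ∘ β) (f ∘ T ∘ g) := by
  obtain ⟨⟨hTb, hTd⟩, α, hα, hTv⟩ := hT
  obtain ⟨hfb, r, hr, hfd⟩ := hf
  obtain ⟨hgb, s, hs, hgd⟩ := hg
  have hrs : r * s = 1 := by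
    have h1 := hfd (g 1) (g 0)
    rw [show f (g 1) = 1 from congrFun hfg 1, show f (g 0) = 0 from congrFun hfg 0] at h1
    rw [hgd] at h1
    simpa using h1.symm
  obtain ⟨β', hβ', hββ', hβ'β⟩ := dih_inv hβ
  constructor
  · refine ⟨hfb.comp (hTb.comp hgb), fun z w => ?_⟩
    simp only [Function.comp_apply, hfd, hTd, hgd, ← mul_assoc, hrs, one_mul]
  · refine ⟨β' ∘ α ∘ β, dih_comp hβ' (dih_comp hα hβ), funext fun i => ?_⟩
    have h1 : T (v (β i)) = v (α (β i)) := congrFun hTv (β i)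
    have h2 : g (f (v (β i))) = v (β i) := congrFun hgf _
    simp only [Function.comp_apply, h2, h1]
    congr 1
    have h := congrFun hββ' (α (β i))
    simp only [Function.comp_apply, id_eq] at h
    rw [h]

lemma sym_conj' {n : ℕ} [NeZero n] {v : Fin n → ℂ} {f T : ℂ → ℂ} {β : Fin n → Fin n}
    (hf : IsSimilarity f) (hβ : IsDihedral n β) (hT : IsPolygonSymmetry n v T) :
    IsPolygonSymmetry n (f ∘ v ∘ β) (f ∘ T ∘ Function.invFun f) :=
  sym_conj hf (sim_inv hf) (sim_comp_invFun hf) (sim_invFun_comp hf) hβ hT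

lemma ctr_mem_fix {n : ℕ} [NeZero n] (v : Fin n → ℂ) : ctr n v ∈ FixPolygon n v := by
  intro T hT
  obtain ⟨hTi, α, hα, hTv⟩ := hT
  have h1 : ctr n (T ∘ v) = T (ctr n v) := sim_ctr (NeZero.ne n) (iso_sim hTi) v
  rw [hTv, ctr_comp v (dih_bij hα)] at h1
  exact h1.symm

lemma fix_map {n : ℕ} [NeZero n] {v : Fin n → ℂ} {f : ℂ → ℂ} {β : Fin n → Fin n}
    (hf : IsSimilarity f) (hβ : IsDihedral n β) :
    FixPolygon n (f ∘ v ∘ β) = f '' FixPolygon n v := by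
  obtain ⟨β', hβ', hββ', hβ'β⟩ := dih_inv hβ
  have hv : v = Function.invFun f ∘ (f ∘ v ∘ β) ∘ β' := by
    funext i
    simp only [Function.comp_apply]
    have h := congrFun hββ' i
    simp only [Function.comp_apply, id_eq] at h
    rw [h, Function.leftInverse_invFun hf.1.1]
  ext x
  constructor
  · intro hx
    refine ⟨Function.invFun f x, ?_, Function.rightInverse_invFun hf.1.2 x⟩
    intro T hT
    have hT' : IsPolygonSymmetry n (f ∘ v ∘ β) (f ∘ T ∘ Function.invFun f) := sym_conj' hf hβ hT
    have := hx _ hT'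
    apply hf.1.1
    simp only [Function.comp_apply] at this
    rw [Function.rightInverse_invFun hf.1.2 x, this]
  · rintro ⟨y, hy, rfl⟩
    intro T' hT'
    have hS : IsPolygonSymmetry n v (Function.invFun f ∘ T' ∘ f) := by
      rw [hv]
      exact sym_conj (sim_inv hf) hf (sim_invFun_comp hf) (sim_comp_invFun hf) hβ' hT'
    have := hy _ hS
    simp only [Function.comp_apply] at this
    have := congrArg f this
    rwa [Function.rightInverse_invFun hf.1.2] at this

end S13

namespace S13

variable {n : ℕ} [NeZero n]

lemma fix_const_subset {w : Fin n → ℂ} {c : ℂ} (hw : ∀ i, w i = c) :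
    FixPolygon n w ⊆ {c} := by
  intro p hp
  have hT : IsPolygonSymmetry n w (fun z => 2 * c - z) := by
    refine ⟨⟨⟨fun a b h => ?_, fun a => ⟨2 * c - a, by ring⟩⟩, fun z w' => ?_⟩,
      id, dih_id, funext fun i => ?_⟩
    · dsimp at h; linear_combination -h
    · rw [show 2*c - z - (2*c - w') = -(z - w') by ring]
      exact norm_neg _
    · simp only [Function.comp_apply, hw, id_eq]; ring
  have h2 : 2 * c - p = p := hp _ hT
  have : p = c := by linear_combination -h2/2
  simpa using this

lemma stab {w : Fin n → ℂ} {f1 f2 : ℂ → ℂ} {β1 β2 : Fin n → Fin n}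
    (h1 : IsSimilarity f1) (h2 : IsSimilarity f2)
    (hb1 : IsDihedral n β1) (hb2 : IsDihedral n β2)
    (heq : f1 ∘ w ∘ β1 = f2 ∘ w ∘ β2) {p : ℂ} (hp : p ∈ FixPolygon n w) :
    f1 p = f2 p := by
  obtain ⟨β1', hβ1', hββ1', hβ1'β⟩ := dih_inv hb1
  set g : ℂ → ℂ := Function.invFun f2 ∘ f1 with hgdef
  have hg : IsSimilarity g := sim_comp (sim_inv h2) h1
  set γ : Fin n → Fin n := β2 ∘ β1' with hγdef
  have hγ : IsDihedral n γ := dih_comp hb2 hβ1'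
  have hgw : g ∘ w = w ∘ γ := by
    funext i
    have hi : β1 (β1' i) = i := by
      have := congrFun hββ1' i; simpa using this
    have h := congrFun heq (β1' i)
    simp only [Function.comp_apply, hi] at h ⊢
    rw [hgdef]
    simp only [Function.comp_apply, h]
    exact Function.leftInverse_invFun h2.1.1 _
  by_cases hc : ∀ i, w i = w 0
  · have hpc : p = w 0 := by simpa using fix_const_subset hc hp
    have h := congrFun heq 0
    simp only [Function.comp_apply, hc (β1 0), hc (β2 0)] at h
    rw [hpc]; exact h
  · push_neg at hc
    obtain ⟨i0, hi0⟩ := hc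
    obtain ⟨ab, hab⟩ := Finite.exists_max (fun q : Fin n × Fin n => ‖w q.1 - w q.2‖)
    have hDpos : 0 < ‖w ab.1 - w ab.2‖ :=
      lt_of_lt_of_le (by simpa [sub_eq_zero] using hi0) (hab (i0, 0))
    obtain ⟨hgb, r, hr, hgd⟩ := hg
    obtain ⟨γ', hγ', hγγ', hγ'γ⟩ := dih_inv hγ
    have hgw' : ∀ i, g (w i) = w (γ i) := fun i => congrFun hgw i
    have hr1 : r ≤ 1 := by
      have key : ‖g (w ab.1) - g (w ab.2)‖
          = r * ‖w ab.1 - w ab.2‖ := hgd _ _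
      rw [hgw', hgw'] at key
      have h2' := hab (γ ab.1, γ ab.2)
      dsimp at h2'
      nlinarith
    have hr2 : 1 ≤ r := by
      have e1 : ∀ i, γ (γ' i) = i := fun i => by have := congrFun hγγ' i; simpa using this
      have key : ‖g (w (γ' ab.1)) - g (w (γ' ab.2))‖
          = r * ‖w (γ' ab.1) - w (γ' ab.2)‖ := hgd _ _
      rw [hgw', hgw', e1, e1] at key
      have h2' := hab (γ' ab.1, γ' ab.2)
      dsimp at h2'
      nlinarith
    have hriso : IsPlaneIsometry g :=
      ⟨hgb, fun z w' => by rw [hgd, le_antisymm hr1 hr2, one_mul]⟩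
    have hsym : IsPolygonSymmetry n w g := ⟨hriso, γ, hγ, hgw⟩
    have hgp : g p = p := hp _ hsym
    have := congrArg f2 hgp
    rwa [hgdef, Function.comp_apply, Function.rightInverse_invFun h2.1.2] at this

end S13

namespace S13

def Rel (n : ℕ) (v w : Fin n → ℂ) : Prop :=
  ∃ f β, IsSimilarity f ∧ IsDihedral n β ∧ v = f ∘ w ∘ β

variable (n : ℕ) [NeZero n]

lemma rel_refl (v : Fin n → ℂ) : Rel n v v := ⟨id, id, sim_id, dih_id, rfl⟩

lemma rel_symm {v w : Fin n → ℂ} (h : Rel n v w) : Rel n w v := by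
  obtain ⟨f, β, hf, hβ, rfl⟩ := h
  obtain ⟨β', hβ', hββ', hβ'β⟩ := dih_inv hβ
  refine ⟨Function.invFun f, β', sim_inv hf, hβ', funext fun i => ?_⟩
  simp only [Function.comp_apply]
  have h1 : β (β' i) = i := by have := congrFun hββ' i; simpa using this
  rw [h1, Function.leftInverse_invFun hf.1.1 (w i)]

lemma rel_trans {u v w : Fin n → ℂ} (h1 : Rel n u v) (h2 : Rel n v w) : Rel n u w := by
  obtain ⟨f, β, hf, hβ, rfl⟩ := h1
  obtain ⟨g, δ, hg, hδ, rfl⟩ := h2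
  exact ⟨f ∘ g, δ ∘ β, sim_comp hf hg, dih_comp hδ hβ, rfl⟩

def relSetoid : Setoid (Fin n → ℂ) :=
  ⟨Rel n, ⟨rel_refl n, rel_symm n, rel_trans n⟩⟩

def rep (v : Fin n → ℂ) : Fin n → ℂ := (Quotient.mk (relSetoid n) v).out

lemma rep_rel (v : Fin n → ℂ) : Rel n v (rep n v) :=
  rel_symm n (Quotient.exact ((Quotient.mk (relSetoid n) v).out_eq))

lemma rep_eq_of_rel {v w : Fin n → ℂ} (h : Rel n v w) : rep n v = rep n w := by
  unfold rep
  rw [Quotient.sound (s := relSetoid n) h]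

/-- Canonical similarity in the decomposition of `v` over its representative. -/
def Xf (v : Fin n → ℂ) : ℂ → ℂ := (rep_rel n v).choose

lemma Xf_spec (v : Fin n → ℂ) :
    ∃ β, IsSimilarity (Xf n v) ∧ IsDihedral n β ∧ v = Xf n v ∘ rep n v ∘ β :=
  (rep_rel n v).choose_spec

lemma Xf_eval {v : Fin n → ℂ} {f : ℂ → ℂ} {β : Fin n → Fin n}
    (hf : IsSimilarity f) (hβ : IsDihedral n β) (hv : v = f ∘ rep n v ∘ β)
    {p : ℂ} (hp : p ∈ FixPolygon n (rep n v)) : Xf n v p = f p := by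
  obtain ⟨β0, hf0, hβ0, hv0⟩ := Xf_spec n v
  exact stab hf0 hf hβ0 hβ (hv0.symm.trans hv) hp

attribute [local instance] Classical.propDecidable

/-- The two selected points. -/
def pt1 (w : Fin n → ℂ) : ℂ :=
  if FixPolygon n w = Set.univ then ctr n w + 1
  else if h : ∃ p ∈ FixPolygon n w, p ≠ ctr n w then h.choose
  else ctr n w

def pt2 (w : Fin n → ℂ) : ℂ :=
  if FixPolygon n w = Set.univ then ctr n w + Complex.I
  else if h : ∃ p ∈ FixPolygon n w, p ≠ ctr n w then h.choose
  else ctr n w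

lemma pt1_mem (w : Fin n → ℂ) : pt1 n w ∈ FixPolygon n w := by
  unfold pt1
  split_ifs with h1 h2
  · rw [h1]; trivial
  · exact h2.choose_spec.1
  · exact ctr_mem_fix w

lemma pt2_mem (w : Fin n → ℂ) : pt2 n w ∈ FixPolygon n w := by
  unfold pt2
  split_ifs with h1 h2
  · rw [h1]; trivial
  · exact h2.choose_spec.1
  · exact ctr_mem_fix w

lemma pt_eq_of_ne_univ {w : Fin n → ℂ} (h : FixPolygon n w ≠ Set.univ) :
    pt1 n w = pt2 n w := by
  unfold pt1 pt2
  rw [if_neg h, if_neg h]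

lemma pt1_univ {w : Fin n → ℂ} (h : FixPolygon n w = Set.univ) :
    pt1 n w = ctr n w + 1 := if_pos h

lemma pt2_univ {w : Fin n → ℂ} (h : FixPolygon n w = Set.univ) :
    pt2 n w = ctr n w + Complex.I := if_pos h

lemma pt1_eq_ctr_iff (w : Fin n → ℂ) :
    pt1 n w = ctr n w ↔ ∃ x, FixPolygon n w = {x} := by
  unfold pt1
  split_ifs with h1 h2
  · simp only [add_eq_left, one_ne_zero, false_iff]
    rintro ⟨x, hx⟩
    rw [h1] at hx
    have h0 : x ∈ ({x} : Set ℂ) := rfl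
    have h1' : x + 1 ∈ ({x} : Set ℂ) := hx ▸ trivial
    simp only [Set.mem_singleton_iff, add_eq_left] at h1'
    exact one_ne_zero h1'
  · constructor
    · intro h; exact absurd h h2.choose_spec.2
    · rintro ⟨x, hx⟩
      obtain ⟨hp, hne⟩ := h2.choose_spec
      have hp' : h2.choose ∈ ({x} : Set ℂ) := by rw [← hx]; exact hp
      have hc' : ctr n w ∈ ({x} : Set ℂ) := by rw [← hx]; exact ctr_mem_fix w
      simp only [Set.mem_singleton_iff] at hp' hc'
      exact absurd (hp'.trans hc'.symm) hne
  · simp only [true_iff]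
    push_neg at h2
    refine ⟨ctr n w, Set.Subset.antisymm (fun p hp => h2 p hp) ?_⟩
    intro p hp
    simp only [Set.mem_singleton_iff] at hp
    rw [hp]; exact ctr_mem_fix w

end S13


open S13

/-- Existence of the centers of rotational and axial asymmetry for `n`-gons:
`n`-gon centers `X` and `Y` such that (a) `X v` equals the centroid of `v` iff
`Fix v` is a single point, and (b) the centroid, `X v` and `Y v` are pairwise
distinct and not collinear iff `Fix v = ℂ`. -/
theorem stmt13 (n : ℕ) (hn : 3 ≤ n) :
    ∃ X Y : (Fin n → ℂ) → ℂ,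
      (∀ (v : Fin n → ℂ) (α : Fin n → Fin n), IsDihedral n α → X (v ∘ α) = X v) ∧
      (∀ (v : Fin n → ℂ) (f : ℂ → ℂ), IsSimilarity f → X (f ∘ v) = f (X v)) ∧
      (∀ (v : Fin n → ℂ) (α : Fin n → Fin n), IsDihedral n α → Y (v ∘ α) = Y v) ∧
      (∀ (v : Fin n → ℂ) (f : ℂ → ℂ), IsSimilarity f → Y (f ∘ v) = f (Y v)) ∧
      (∀ v : Fin n → ℂ,
        X v = (∑ i, v i) / (n : ℂ) ↔ ∃ x : ℂ, FixPolygon n v = {x}) ∧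
      (∀ v : Fin n → ℂ,
        ((∑ i, v i) / (n : ℂ) ≠ X v ∧ (∑ i, v i) / (n : ℂ) ≠ Y v ∧ X v ≠ Y v ∧
            ¬ Collinear ℝ ({(∑ i, v i) / (n : ℂ), X v, Y v} : Set ℂ)) ↔
          FixPolygon n v = Set.univ) := by
  haveI : NeZero n := ⟨by omega⟩
  refine ⟨fun v => Xf n v (pt1 n (rep n v)), fun v => Xf n v (pt2 n (rep n v)),
    ?_, ?_, ?_, ?_, ?_, ?_⟩
  -- dihedral invariance of X
  · intro v α hα
    beta_reduce
    obtain ⟨β0, hf0, hβ0, hv0⟩ := Xf_spec n v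
    have hrw : rep n (v ∘ α) = rep n v := rep_eq_of_rel n ⟨id, α, sim_id, hα, rfl⟩
    have hv' : v ∘ α = Xf n v ∘ rep n (v ∘ α) ∘ (β0 ∘ α) := by
      rw [hrw]; funext i; exact congrFun hv0 (α i)
    rw [hrw]
    rw [Xf_eval n hf0 (dih_comp hβ0 hα) hv' (by rw [hrw]; exact pt1_mem n _),
      Xf_eval n hf0 hβ0 hv0 (pt1_mem n _)]
  -- similarity equivariance of X
  · intro v f hf
    beta_reduce
    obtain ⟨β0, hf0, hβ0, hv0⟩ := Xf_spec n v
    have hrw : rep n (f ∘ v) = rep n v := rep_eq_of_rel n ⟨f, id, hf, dih_id, rfl⟩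
    have hv' : f ∘ v = (f ∘ Xf n v) ∘ rep n (f ∘ v) ∘ β0 := by
      rw [hrw]; funext i; exact congrArg f (congrFun hv0 i)
    rw [hrw]
    rw [Xf_eval n (sim_comp hf hf0) hβ0 hv' (by rw [hrw]; exact pt1_mem n _),
      Xf_eval n hf0 hβ0 hv0 (pt1_mem n _)]
    rfl
  -- dihedral invariance of Y
  · intro v α hα
    beta_reduce
    obtain ⟨β0, hf0, hβ0, hv0⟩ := Xf_spec n v
    have hrw : rep n (v ∘ α) = rep n v := rep_eq_of_rel n ⟨id, α, sim_id, hα, rfl⟩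
    have hv' : v ∘ α = Xf n v ∘ rep n (v ∘ α) ∘ (β0 ∘ α) := by
      rw [hrw]; funext i; exact congrFun hv0 (α i)
    rw [hrw]
    rw [Xf_eval n hf0 (dih_comp hβ0 hα) hv' (by rw [hrw]; exact pt2_mem n _),
      Xf_eval n hf0 hβ0 hv0 (pt2_mem n _)]
  -- similarity equivariance of Y
  · intro v f hf
    beta_reduce
    obtain ⟨β0, hf0, hβ0, hv0⟩ := Xf_spec n v
    have hrw : rep n (f ∘ v) = rep n v := rep_eq_of_rel n ⟨f, id, hf, dih_id, rfl⟩
    have hv' : f ∘ v = (f ∘ Xf n v) ∘ rep n (f ∘ v) ∘ β0 := by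
      rw [hrw]; funext i; exact congrArg f (congrFun hv0 i)
    rw [hrw]
    rw [Xf_eval n (sim_comp hf hf0) hβ0 hv' (by rw [hrw]; exact pt2_mem n _),
      Xf_eval n hf0 hβ0 hv0 (pt2_mem n _)]
    rfl
  -- (e)
  · intro v
    beta_reduce
    obtain ⟨β0, hf0, hβ0, hv0⟩ := Xf_spec n v
    set w := rep n v with hwdef
    have hctr : (∑ i, v i) / (n : ℂ) = Xf n v (ctr n w) := by
      have h1 := sim_ctr (NeZero.ne n) hf0 (w ∘ β0)
      rw [ctr_comp w (dih_bij hβ0)] at h1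
      exact (congrArg (ctr n) hv0).trans h1
    have hfixv : FixPolygon n v = Xf n v '' FixPolygon n w :=
      (congrArg (FixPolygon n) hv0).trans (fix_map hf0 hβ0)
    rw [hctr]
    constructor
    · intro h
      have h1 : pt1 n w = ctr n w := hf0.1.1 h
      obtain ⟨x, hx⟩ := (pt1_eq_ctr_iff n w).mp h1
      exact ⟨Xf n v x, by rw [hfixv, hx, Set.image_singleton]⟩
    · rintro ⟨x, hx⟩
      have hsing : ∃ y, FixPolygon n w = {y} := by
        refine ⟨ctr n w, Set.Subset.antisymm (fun y hy => ?_) (fun y hy => ?_)⟩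
        · have h1 : Xf n v y ∈ ({x} : Set ℂ) := by
            rw [← hx, hfixv]; exact ⟨y, hy, rfl⟩
          have h2 : Xf n v (ctr n w) ∈ ({x} : Set ℂ) := by
            rw [← hx, hfixv]; exact ⟨ctr n w, ctr_mem_fix w, rfl⟩
          simp only [Set.mem_singleton_iff] at h1 h2
          exact hf0.1.1 (h1.trans h2.symm)
        · simp only [Set.mem_singleton_iff] at hy
          rw [hy]; exact ctr_mem_fix w
      rw [(pt1_eq_ctr_iff n w).mpr hsing]
  -- (f)
  · intro v
    beta_reduce
    obtain ⟨β0, hf0, hβ0, hv0⟩ := Xf_spec n v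
    set w := rep n v with hwdef
    have hctr : (∑ i, v i) / (n : ℂ) = Xf n v (ctr n w) := by
      have h1 := sim_ctr (NeZero.ne n) hf0 (w ∘ β0)
      rw [ctr_comp w (dih_bij hβ0)] at h1
      exact (congrArg (ctr n) hv0).trans h1
    have hfixv : FixPolygon n v = Xf n v '' FixPolygon n w :=
      (congrArg (FixPolygon n) hv0).trans (fix_map hf0 hβ0)
    have hfix_iff : FixPolygon n v = Set.univ ↔ FixPolygon n w = Set.univ := by
      rw [hfixv]
      constructor
      · intro h
        ext y
        simp only [Set.mem_univ, iff_true]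
        have h2 : Xf n v y ∈ Xf n v '' FixPolygon n w := by rw [h]; trivial
        obtain ⟨z, hz, hzy⟩ := h2
        rwa [← hf0.1.1 hzy]
      · intro h
        rw [h, Set.image_univ, Set.range_eq_univ.mpr hf0.1.2]
    rw [hctr]
    constructor
    · rintro ⟨h1, h2, h3, h4⟩
      by_contra hne
      rw [hfix_iff] at hne
      exact h3 (by rw [pt_eq_of_ne_univ n hne])
    · intro huniv
      have hw : FixPolygon n w = Set.univ := hfix_iff.mp huniv
      rw [pt1_univ n hw, pt2_univ n hw]
      obtain ⟨L, hLb, hL⟩ := sim_affine hf0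
      have hinj := hf0.1.1
      refine ⟨fun h => ?_, fun h => ?_, fun h => ?_, fun h => ?_⟩
      · have h' := hinj h
        simp at h'
      · have h' := hinj h
        have h'' : (0:ℂ) = Complex.I := by linear_combination h'
        simpa [Complex.ext_iff] using h''
      · have h' := hinj h
        have h'' : (1:ℂ) = Complex.I := by linear_combination h'
        simpa [Complex.ext_iff] using h''
      · set c := ctr n w with hcdef
        have hmem : Xf n v c ∈ ({Xf n v c, Xf n v (c+1), Xf n v (c+Complex.I)} : Set ℂ) :=
          Set.mem_insert _ _
        rw [collinear_iff_of_mem hmem] at h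
        obtain ⟨d, hd⟩ := h
        obtain ⟨t1, ht1⟩ := hd (Xf n v (c+1)) (by simp)
        obtain ⟨t2, ht2⟩ := hd (Xf n v (c+Complex.I)) (by simp)
        have e1 : t1 • d = L 1 := by
          have h5 : Xf n v (c+1) - Xf n v c = L 1 := by
            rw [hL (c+1), hL c, map_add]; ring
          rw [← h5, ht1]; simp [vadd_eq_add]
        have e2 : t2 • d = L Complex.I := by
          have h5 : Xf n v (c+Complex.I) - Xf n v c = L Complex.I := by
            rw [hL (c+Complex.I), hL c, map_add]; ring
          rw [← h5, ht2]; simp [vadd_eq_add]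
        have hL1 : L 1 ≠ 0 := fun hc => one_ne_zero (hLb.1 (hc.trans (map_zero L).symm))
        have ht1ne : t1 ≠ 0 := fun hc => hL1 (by rw [← e1, hc, zero_smul])
        have hkey : L Complex.I = L ((t2/t1 : ℝ) • (1:ℂ)) := by
          rw [map_smul, ← e1, ← e2, smul_smul]
          congr 1
          field_simp
        have hI : Complex.I = ((t2/t1 : ℝ) : ℂ) := by
          have h7 := hLb.1 hkey
          rwa [Complex.real_smul, mul_one] at h7
        have h8 := congrArg Complex.im hI
        simp at h8
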